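/- There exist an integer k₀ ≥ 1 and a function j : {n ∈ ℕ : n ≥ k₀} → ℕ such that for any sequence (α_l)_{l≥1} of positive real numbers there exist a sequence (M_k)_{k≥k₀} of positive integers and a sequence (r_k)_{k≥k₀} of positive real numbers satisfying: (i) (M_k) is increasing and M_{k+1} − M_k → +∞; (ii) (r_k) is decreasing and r_{k+1}/r_k → 0; (iii) for every l ∈ ℕ, every ε > 0, every λ > 1 and every K > 0, there exists k > K such that j(k) = l and |λ^{M_k} r_k − α_l| < ε. -/

import Mathlib

open Filter Topology

set_option maxHeartbeats 1000000

noncomputable section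

namespace AG

/-- the choice function -/
def jf (k : ℕ) : ℕ := padicValNat 2 k + 1

def lOf (s : ℕ) : ℕ := (Nat.unpair s).1 + 1
def nOf (s : ℕ) : ℕ := s + 2
def GOf (s : ℕ) : ℕ := nOf s * (s + 1)

lemma one_le_lOf (s : ℕ) : 1 ≤ lOf s := Nat.le_add_left 1 _
lemma lOf_le (s : ℕ) : lOf s ≤ s + 1 := Nat.add_le_add_right (Nat.unpair_left_le s) 1
lemma one_le_nOf (s : ℕ) : 1 ≤ nOf s := by simp [nOf]
lemma one_le_GOf (s : ℕ) : 1 ≤ GOf s := Nat.one_le_iff_ne_zero.2 (by simp [GOf, nOf])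

lemma aux_sq_le (s : ℕ) : (s + 2) * (s + 1) ≤ 2 ^ (s + 3) := by
  induction s with
  | zero => norm_num
  | succ n ih =>
    have h2 : n + 2 < 2 ^ (n + 2) := @Nat.lt_two_pow_self (n + 2)
    calc (n + 1 + 2) * (n + 1 + 1) = (n + 2) * (n + 1) + 2 * (n + 2) := by ring
      _ ≤ 2 ^ (n + 3) + 2 * 2 ^ (n + 2) := Nat.add_le_add ih (Nat.mul_le_mul_left 2 h2.le)
      _ = 2 ^ (n + 1 + 3) := by ring

lemma pow_lOf_mul_GOf_le (s : ℕ) : 2 ^ lOf s * GOf s ≤ 4 ^ (s + 2) := by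
  have h1 : 2 ^ lOf s ≤ 2 ^ (s + 1) := Nat.pow_le_pow_right (by norm_num) (lOf_le s)
  have h2 : GOf s = (s + 2) * (s + 1) := rfl
  have h3 := aux_sq_le s
  have h4 : 2 ^ (s + 1) * 2 ^ (s + 3) = 4 ^ (s + 2) := by
    rw [← pow_add]
    have : s + 1 + (s + 3) = 2 * (s + 2) := by ring
    rw [this, pow_mul]
    norm_num
  calc 2 ^ lOf s * GOf s ≤ 2 ^ (s + 1) * 2 ^ (s + 3) := Nat.mul_le_mul h1 (h2 ▸ h3)
    _ = 4 ^ (s + 2) := h4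

/-- the in-stage grid value at offset `m`, when the stage starts with `M`-value `A`. -/
def cs (s A : ℕ) (m : ℕ) : ℝ :=
  (1 + ∑ i ∈ Finset.range m, (1 : ℝ) / (A + (i + 1) * GOf s)) / (nOf s)

lemma cs_zero (s A : ℕ) : cs s A 0 = 1 / nOf s := by simp [cs]

lemma denom_pos (s A : ℕ) (i : ℕ) : (0:ℝ) < (A : ℝ) + ((i : ℝ) + 1) * GOf s := by
  have hG : (1:ℝ) ≤ (GOf s : ℝ) := by exact_mod_cast one_le_GOf s
  have hA : (0:ℝ) ≤ (A : ℝ) := Nat.cast_nonneg A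
  have hi : (0:ℝ) ≤ (i : ℝ) := Nat.cast_nonneg i
  nlinarith

lemma cs_succ (s A m : ℕ) : cs s A (m + 1) = cs s A m + (1 / ((A : ℝ) + (m + 1) * GOf s)) / nOf s := by
  simp only [cs, Finset.sum_range_succ, add_div, Nat.cast_add, Nat.cast_one]
  ring

lemma cs_mono (s A : ℕ) : Monotone (cs s A) := by
  intro m m' h
  have hsub : Finset.range m ⊆ Finset.range m' := Finset.range_subset_range.2 h
  have hsum := Finset.sum_le_sum_of_subset_of_nonneg hsub
    (fun i _ _ => le_of_lt (div_pos one_pos (denom_pos s A i)))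
  have hn : (0:ℝ) < (nOf s : ℝ) := by exact_mod_cast one_le_nOf s
  unfold cs
  gcongr

lemma cs_pos (s A m : ℕ) : 0 < cs s A m := by
  have h : (0:ℝ) ≤ ∑ i ∈ Finset.range m, (1 : ℝ) / (A + (i + 1) * GOf s) :=
    Finset.sum_nonneg fun i _ => le_of_lt (div_pos one_pos (denom_pos s A i))
  have hn : (0:ℝ) < (nOf s : ℝ) := by exact_mod_cast one_le_nOf s
  have : (0:ℝ) < 1 + ∑ i ∈ Finset.range m, (1 : ℝ) / (A + (i + 1) * GOf s) := by linarith
  exact div_pos this hn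

lemma one_div_nOf_le_cs (s A m : ℕ) : 1 / (nOf s : ℝ) ≤ cs s A m := by
  rw [← cs_zero]; exact cs_mono s A (Nat.zero_le m)

lemma cs_le (s A m : ℕ) : cs s A m ≤ m + 1 := by
  have hn : (1:ℝ) ≤ (nOf s : ℝ) := by exact_mod_cast one_le_nOf s
  have hterm : ∀ i ∈ Finset.range m, (1 : ℝ) / (A + (i + 1) * GOf s) ≤ 1 := by
    intro i _
    have hG : (1:ℝ) ≤ (GOf s : ℝ) := by exact_mod_cast one_le_GOf s
    have h1 : (1:ℝ) ≤ (A : ℝ) + (i + 1) * GOf s := by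
      have : (0:ℝ) ≤ (A:ℝ) := Nat.cast_nonneg A
      have hi : (0:ℝ) ≤ (i : ℝ) := Nat.cast_nonneg i
      have h2 : (1:ℝ) ≤ ((i:ℝ) + 1) * GOf s := by nlinarith
      linarith
    exact div_le_one_of_le₀ h1 (by linarith)
  have hsum : ∑ i ∈ Finset.range m, (1 : ℝ) / (A + (i + 1) * GOf s) ≤ m := by
    calc _ ≤ ∑ _i ∈ Finset.range m, (1:ℝ) := Finset.sum_le_sum hterm
      _ = m := by simp
  have hn0 : (0:ℝ) < (nOf s : ℝ) := by linarith
  have h1 : cs s A m ≤ (1 + m) / (nOf s : ℝ) := by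
    unfold cs; gcongr
  have h2 : (1 + (m:ℝ)) / (nOf s:ℝ) ≤ 1 + m := div_le_self (by positivity) hn
  linarith

lemma cs_tendsto (s A : ℕ) : Tendsto (cs s A) atTop atTop := by
  have hG : (1:ℝ) ≤ (GOf s : ℝ) := by exact_mod_cast one_le_GOf s
  have hA : (0:ℝ) ≤ (A : ℝ) := Nat.cast_nonneg A
  have hn : (0:ℝ) < (nOf s : ℝ) := by exact_mod_cast one_le_nOf s
  have hAG : (0:ℝ) < (A : ℝ) + GOf s := by linarith
  have key : ∀ m, (1 / ((A:ℝ) + GOf s)) * (∑ i ∈ Finset.range m, (1 / (i + 1) : ℝ)) / (nOf s)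
      ≤ cs s A m := by
    intro m
    have hterm : ∀ i ∈ Finset.range m,
        (1 / ((A:ℝ) + GOf s)) * (1 / ((i:ℝ) + 1)) ≤ 1 / ((A:ℝ) + ((i:ℝ) + 1) * GOf s) := by
      intro i _
      have hi : (0:ℝ) ≤ (i : ℝ) := Nat.cast_nonneg i
      rw [div_mul_div_comm, one_mul]
      apply div_le_div_of_nonneg_left one_pos.le (denom_pos s A i)
      nlinarith
    have hsum : (1 / ((A:ℝ) + GOf s)) * (∑ i ∈ Finset.range m, (1 / (i + 1) : ℝ))
        ≤ ∑ i ∈ Finset.range m, (1:ℝ) / ((A:ℝ) + ((i:ℝ) + 1) * GOf s) := by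
      rw [Finset.mul_sum]
      exact Finset.sum_le_sum hterm
    unfold cs
    gcongr
    linarith
  apply tendsto_atTop_mono key
  apply Tendsto.atTop_div_const hn
  exact (Real.tendsto_sum_range_one_div_nat_succ_atTop.const_mul_atTop (by positivity))

lemma cs_unbounded (s A : ℕ) (C : ℝ) : ∃ m, C ≤ cs s A m := by
  rcases (cs_tendsto s A).eventually_ge_atTop C |>.exists with ⟨m, hm⟩
  exact ⟨m, hm⟩

/-- length of stage `s` when it starts with `M`-value `A`: least `m` with `cs s A m ≥ nOf s`. -/
def mlen (s A : ℕ) : ℕ := Nat.find (cs_unbounded s A (nOf s))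

lemma cs_mlen (s A : ℕ) : (nOf s : ℝ) ≤ cs s A (mlen s A) := Nat.find_spec (cs_unbounded s A (nOf s))

lemma exists_fiber (l : ℕ) (hl : 1 ≤ l) (x : ℕ) :
    ∃ t, x < t ∧ t ≤ x + 2 ^ l ∧ padicValNat 2 t = l - 1 := by
  have h2 : Fact (Nat.Prime 2) := ⟨Nat.prime_two⟩
  set d := 2 ^ (l - 1) with hd
  have hdpos : 0 < d := by positivity
  set q := x / d with hq
  obtain ⟨u, hu_odd, hu1, hu2⟩ : ∃ u, Odd u ∧ q + 1 ≤ u ∧ u ≤ q + 2 := by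
    rcases Nat.even_or_odd (q + 1) with he | ho
    · exact ⟨q + 2, by rcases he with ⟨c, hc⟩; exact ⟨c, by omega⟩, by omega, le_refl _⟩
    · exact ⟨q + 1, ho, le_refl _, by omega⟩
  have hdm : d * q + x % d = x := by rw [hq]; exact Nat.div_add_mod x d
  have hmlt : x % d < d := Nat.mod_lt x hdpos
  refine ⟨d * u, ?_, ?_, ?_⟩
  · have h2 : d * (q + 1) ≤ d * u := Nat.mul_le_mul_left d hu1
    calc x = d * q + x % d := hdm.symm
      _ < d * q + d := by omega
      _ = d * (q + 1) := by ring
      _ ≤ d * u := h2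
  · have h1 : d * u ≤ d * (q + 2) := Nat.mul_le_mul_left d hu2
    have h3 : 2 ^ l = 2 * d := by
      rw [hd, ← pow_succ']
      congr 1
      omega
    calc d * u ≤ d * (q + 2) := h1
      _ = d * q + 2 * d := by ring
      _ ≤ x + 2 * d := by omega
      _ = x + 2 ^ l := by omega
  · have hu0 : u ≠ 0 := by rintro rfl; simp [Nat.odd_iff] at hu_odd
    have hnd : ¬ 2 ∣ u := by
      rw [Nat.odd_iff] at hu_odd
      omega
    rw [padicValNat.mul (by positivity) hu0, padicValNat.prime_pow,
      padicValNat.eq_zero_of_not_dvd hnd, add_zero]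

def Ebound (α : ℕ → ℝ) (s : ℕ) : ℕ :=
  ⌈|Real.log (α (lOf (s + 1)))| + |Real.log (α (lOf s))|⌉₊ + 1

lemma exists_next_fiber (s b : ℕ) :
    ∃ t, b + 2 ^ lOf s < t ∧ padicValNat 2 t = lOf (s + 1) - 1 := by
  obtain ⟨t, h1, _, h3⟩ := exists_fiber (lOf (s + 1)) (one_le_lOf _) (b + 2 ^ lOf s)
  exact ⟨t, h1, h3⟩

def stage (α : ℕ → ℝ) : ℕ → ℕ × ℕ
  | 0 => (1, 16)
  | s + 1 =>
    let a := (stage α s).1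
    let A := (stage α s).2
    let b := a + mlen s A
    let a' := Nat.find (exists_next_fiber s b)
    let Mp := A + (a' - 1 - a) * GOf s
    (a', Mp + nOf (s + 1) * (Mp * (a' - a + 1) + Ebound α s + (s + 1)) + 4 ^ (s + 3))

variable (α : ℕ → ℝ)

def aS (s : ℕ) : ℕ := (stage α s).1
def AS (s : ℕ) : ℕ := (stage α s).2
def bS (s : ℕ) : ℕ := aS α s + mlen s (AS α s)

lemma aS_succ (s : ℕ) : aS α (s + 1) = Nat.find (exists_next_fiber s (bS α s)) := rfl

lemma AS_succ (s : ℕ) : AS α (s + 1) =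
    (AS α s + (aS α (s + 1) - 1 - aS α s) * GOf s) +
      nOf (s + 1) * ((AS α s + (aS α (s + 1) - 1 - aS α s) * GOf s) * (aS α (s + 1) - aS α s + 1)
        + Ebound α s + (s + 1)) + 4 ^ (s + 3) := rfl

lemma aS_zero : aS α 0 = 1 := rfl
lemma AS_zero : AS α 0 = 16 := rfl

lemma bS_lt_aS_succ (s : ℕ) : bS α s + 2 ^ lOf s < aS α (s + 1) :=
  (Nat.find_spec (exists_next_fiber s (bS α s))).1

lemma padic_aS (s : ℕ) : padicValNat 2 (aS α s) = lOf s - 1 := by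
  cases s with
  | zero => simp [aS_zero, lOf]
  | succ n => exact (Nat.find_spec (exists_next_fiber n (bS α n))).2

lemma aS_le_bS (s : ℕ) : aS α s ≤ bS α s := Nat.le_add_right _ _

lemma aS_lt_aS_succ (s : ℕ) : aS α s < aS α (s + 1) := by
  have h1 := bS_lt_aS_succ α s
  have h2 := aS_le_bS α s
  have h3 : 1 ≤ 2 ^ lOf s := Nat.one_le_two_pow
  omega

lemma aS_strictMono : StrictMono (aS α) := strictMono_nat_of_lt_succ (aS_lt_aS_succ α)

lemma succ_le_aS (s : ℕ) : s + 1 ≤ aS α s := by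
  induction s with
  | zero => simp [aS_zero]
  | succ n ih => have := aS_lt_aS_succ α n; omega

lemma pow_le_AS (s : ℕ) : 4 ^ (s + 2) ≤ AS α s := by
  cases s with
  | zero => simp [AS_zero]
  | succ n =>
    have e : n + 1 + 2 = n + 3 := by omega
    rw [e, AS_succ]
    omega

lemma pow_lOf_mul_GOf_le_AS (s : ℕ) : 2 ^ lOf s * GOf s ≤ AS α s :=
  le_trans (pow_lOf_mul_GOf_le s) (pow_le_AS α s)

/-- the stage of index `k` -/
def σS (k : ℕ) : ℕ := Nat.findGreatest (fun s => aS α s ≤ k) k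

def Mf (k : ℕ) : ℕ := AS α (σS α k) + (k - aS α (σS α k)) * GOf (σS α k)
def cf (k : ℕ) : ℝ := cs (σS α k) (AS α (σS α k)) (k - aS α (σS α k))
def rf (k : ℕ) : ℝ := α (lOf (σS α k)) * Real.exp (-(Mf α k * cf α k))

lemma σS_spec (k : ℕ) (hk : 1 ≤ k) : aS α (σS α k) ≤ k :=
  Nat.findGreatest_spec (P := fun s => aS α s ≤ k) (m := 0) (Nat.zero_le k)
    (by simpa [aS_zero] using hk)

lemma σS_lt (k : ℕ) (hk : 1 ≤ k) : k < aS α (σS α k + 1) := by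
  by_contra h
  push_neg at h
  have h2 := succ_le_aS α (σS α k + 1)
  have h1 : σS α k + 1 ≤ k := by omega
  exact Nat.findGreatest_is_greatest (P := fun s => aS α s ≤ k)
    (Nat.lt_succ_self _) h1 h

lemma le_σS (s k : ℕ) (h : aS α s ≤ k) : s ≤ σS α k :=
  Nat.le_findGreatest (le_trans (by have := succ_le_aS α s; omega) h) h

lemma σS_eq (s k : ℕ) (h1 : aS α s ≤ k) (h2 : k < aS α (s + 1)) : σS α k = s := by
  have hs := succ_le_aS α s
  have hk : 1 ≤ k := by omega
  have ha := σS_spec α k hk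
  have hb := σS_lt α k hk
  rcases lt_trichotomy (σS α k) s with h | h | h
  · have := (aS_strictMono α).monotone (show σS α k + 1 ≤ s by omega)
    omega
  · exact h
  · have := (aS_strictMono α).monotone (show s + 1 ≤ σS α k by omega)
    omega

lemma σS_tendsto : Tendsto (σS α) atTop atTop := by
  apply tendsto_atTop_atTop.2
  intro s
  exact ⟨aS α s, fun k hk => le_σS α s k hk⟩

lemma Mf_pos (k : ℕ) : 0 < Mf α k := by
  have := pow_le_AS α (σS α k)
  have h4 : 0 < 4 ^ (σS α k + 2) := by positivity
  unfold Mf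
  omega

lemma Ebound_ge (s : ℕ) :
    Real.log (α (lOf (s + 1))) - Real.log (α (lOf s)) ≤ (Ebound α s : ℝ) := by
  have h := Nat.le_ceil (|Real.log (α (lOf (s + 1)))| + |Real.log (α (lOf s))|)
  have h1 : Real.log (α (lOf (s + 1))) ≤ |Real.log (α (lOf (s + 1)))| := le_abs_self _
  have h2 : -Real.log (α (lOf s)) ≤ |Real.log (α (lOf s))| := neg_le_abs _
  have h3 : ((⌈|Real.log (α (lOf (s + 1)))| + |Real.log (α (lOf s))|⌉₊ : ℝ)) ≤ (Ebound α s : ℝ) := by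
    unfold Ebound
    push_cast
    linarith
  linarith

lemma step (hα : ∀ l, 1 ≤ l → 0 < α l) (k : ℕ) (hk : 1 ≤ k) :
    Mf α k + (σS α k + 1) ≤ Mf α (k + 1) ∧
      rf α (k + 1) ≤ rf α k * Real.exp (-((σS α k : ℝ) + 1)) := by
  obtain ⟨s, hs⟩ : ∃ s, σS α k = s := ⟨_, rfl⟩
  rw [hs]
  have hak : aS α s ≤ k := hs ▸ σS_spec α k hk
  have hka : k < aS α (s + 1) := hs ▸ σS_lt α k hk
  have hαl : 0 < α (lOf s) := hα _ (one_le_lOf s)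
  have hn1 : (1:ℝ) ≤ (nOf s : ℝ) := by exact_mod_cast one_le_nOf s
  have hn0 : (0:ℝ) < (nOf s : ℝ) := by linarith
  have hGr : (GOf s : ℝ) = (nOf s : ℝ) * ((s:ℝ) + 1) := by unfold GOf; push_cast; ring
  obtain ⟨m, hmk⟩ : ∃ m, k = aS α s + m := ⟨k - aS α s, by omega⟩
  have hm : k - aS α s = m := by omega
  have hM0 : Mf α k = AS α s + m * GOf s := by unfold Mf; rw [hs, hm]
  have hr0 : rf α k = α (lOf s) * Real.exp (-(Mf α k * cf α k)) := by
    unfold rf; rw [hs]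
  have hc0 : cf α k = cs s (AS α s) m := by unfold cf; rw [hs, hm]
  rcases Nat.lt_or_ge (k + 1) (aS α (s + 1)) with hcase | hcase
  · -- same stage
    have hσ1 : σS α (k + 1) = s := σS_eq α s (k + 1) (by omega) hcase
    have hm1 : k + 1 - aS α s = m + 1 := by omega
    have hM1 : Mf α (k + 1) = AS α s + (m + 1) * GOf s := by
      unfold Mf; rw [hσ1, hm1]
    have hGlb : s + 1 ≤ GOf s := by
      have h1 := one_le_nOf s
      have h2 : GOf s = nOf s * (s + 1) := rfl
      have h3 : nOf s * (s + 1) ≥ 1 * (s + 1) := Nat.mul_le_mul_right _ h1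
      omega
    constructor
    · rw [hM1, hM0]
      have h4 : (m + 1) * GOf s = m * GOf s + GOf s := by ring
      omega
    · -- r step
      have hc1 : cf α (k + 1) = cs s (AS α s) m + (1 / ((AS α s : ℝ) + ((m:ℝ) + 1) * GOf s)) / (nOf s) := by
        unfold cf
        rw [hσ1, hm1, cs_succ]
      have hMr : (Mf α (k+1) : ℝ) = (AS α s : ℝ) + ((m:ℝ) + 1) * GOf s := by
        rw [hM1]; push_cast; ring
      have hM1pos : (0:ℝ) < (AS α s : ℝ) + ((m:ℝ) + 1) * GOf s := denom_pos s _ m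
      have hkey : (Mf α k : ℝ) * cf α k + ((s:ℝ) + 1) ≤ (Mf α (k+1) : ℝ) * cf α (k+1) := by
        have hclb : 1 / (nOf s : ℝ) ≤ cs s (AS α s) m := one_div_nOf_le_cs _ _ _
        have hM0r : (Mf α k : ℝ) = (AS α s : ℝ) + (m:ℝ) * GOf s := by rw [hM0]; push_cast; ring
        rw [hc1, hMr, hM0r, hc0]
        have hexp : ((AS α s : ℝ) + ((m:ℝ) + 1) * GOf s) *
            (1 / ((AS α s : ℝ) + ((m:ℝ) + 1) * GOf s) / (nOf s)) = 1 / (nOf s : ℝ) := by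
          field_simp
        rw [mul_add, hexp]
        have h1n : (0:ℝ) < 1 / (nOf s : ℝ) := by positivity
        have hGc : (GOf s : ℝ) * cs s (AS α s) m ≥ (s:ℝ) + 1 := by
          calc (GOf s : ℝ) * cs s (AS α s) m ≥ (GOf s : ℝ) * (1 / (nOf s : ℝ)) := by
                have hG0 : (0:ℝ) ≤ (GOf s : ℝ) := Nat.cast_nonneg _
                exact mul_le_mul_of_nonneg_left hclb hG0
            _ = (s:ℝ) + 1 := by rw [hGr]; field_simp
        have hx : ((AS α s : ℝ) + ((m:ℝ) + 1) * GOf s) * cs s (AS α s) m =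
            ((AS α s : ℝ) + (m:ℝ) * GOf s) * cs s (AS α s) m + (GOf s : ℝ) * cs s (AS α s) m := by
          ring
        linarith
      have hr1 : rf α (k + 1) = α (lOf s) * Real.exp (-(Mf α (k+1) * cf α (k+1))) := by
        unfold rf; rw [hσ1]
      rw [hr1, hr0, mul_assoc, ← Real.exp_add]
      apply mul_le_mul_of_nonneg_left _ hαl.le
      apply Real.exp_le_exp.2
      linarith
  · -- new stage
    have hk1 : k + 1 = aS α (s + 1) := by omega
    have hσ1 : σS α (k + 1) = s + 1 := by
      apply σS_eq α (s + 1) (k + 1) (by omega)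
      rw [hk1]
      exact aS_lt_aS_succ α (s + 1)
    have hd : aS α (s + 1) - 1 - aS α s = m := by omega
    have hA' : AS α (s + 1) = (AS α s + m * GOf s) +
        nOf (s + 1) * ((AS α s + m * GOf s) * (aS α (s + 1) - aS α s + 1) + Ebound α s + (s + 1)) +
        4 ^ (s + 3) := by
      rw [AS_succ, hd]
    have hz : k + 1 - aS α (s + 1) = 0 := by omega
    have hM1 : Mf α (k + 1) = AS α (s + 1) := by
      unfold Mf
      rw [hσ1, hz]
      simp
    constructor
    · rw [hM1, hA', hM0]
      have h1 : 1 ≤ nOf (s + 1) := one_le_nOf _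
      have h2 : nOf (s + 1) * ((AS α s + m * GOf s) * (aS α (s + 1) - aS α s + 1) + Ebound α s + (s + 1)) ≥
          1 * (s + 1) :=
        Nat.mul_le_mul h1 (by omega)
      have h3 : 0 ≤ 4 ^ (s + 3) := Nat.zero_le _
      linarith
    · -- r step across boundary
      have hαl' : 0 < α (lOf (s + 1)) := hα _ (one_le_lOf _)
      have hc1 : cf α (k + 1) = 1 / (nOf (s + 1) : ℝ) := by
        unfold cf
        rw [hσ1, hz, cs_zero]
      have hr1 : rf α (k + 1) = α (lOf (s + 1)) * Real.exp (-(Mf α (k+1) * cf α (k+1))) := by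
        unfold rf; rw [hσ1]
      have hn'1 : (1:ℝ) ≤ (nOf (s+1) : ℝ) := by exact_mod_cast one_le_nOf (s+1)
      have hn'0 : (0:ℝ) < (nOf (s+1) : ℝ) := by linarith
      have hc0le : cf α k ≤ (m:ℝ) + 1 := by rw [hc0]; exact cs_le _ _ _
      have hdm : (m:ℝ) + 1 ≤ ((aS α (s+1) - aS α s + 1 : ℕ) : ℝ) := by
        have : m + 1 ≤ aS α (s+1) - aS α s + 1 := by omega
        exact_mod_cast this
      have hMk0 : (0:ℝ) ≤ (Mf α k : ℝ) := Nat.cast_nonneg _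
      have hEb := Ebound_ge α s
      set D : ℕ := aS α (s+1) - aS α s + 1 with hD
      have hkey : (Mf α k : ℝ) * cf α k + ((s:ℝ) + 1) +
          Real.log (α (lOf (s + 1))) - Real.log (α (lOf s)) ≤
          (Mf α (k + 1) : ℝ) * cf α (k + 1) := by
        rw [hM1, hc1, hA', ← hM0]
        have hpc : ((Mf α k + nOf (s + 1) * (Mf α k * D + Ebound α s + (s + 1)) +
            4 ^ (s + 3) : ℕ) : ℝ) = (Mf α k : ℝ) +
            (nOf (s+1) : ℝ) * ((Mf α k : ℝ) * (D : ℝ) + (Ebound α s : ℝ) + ((s:ℝ)+1)) +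
            (4:ℝ) ^ (s + 3) := by push_cast; ring
        rw [hpc]
        have hexpand : ((Mf α k : ℝ) +
            (nOf (s+1) : ℝ) * ((Mf α k : ℝ) * (D : ℝ) + (Ebound α s : ℝ) + ((s:ℝ)+1)) +
            (4:ℝ) ^ (s + 3)) * (1 / (nOf (s + 1) : ℝ)) -
            ((Mf α k : ℝ) * (D : ℝ) + (Ebound α s : ℝ) + ((s:ℝ) + 1)) =
            ((Mf α k : ℝ) + (4:ℝ)^(s+3)) / (nOf (s+1) : ℝ) := by
          field_simp
          ring
        have hpos : (0:ℝ) ≤ ((Mf α k : ℝ) + (4:ℝ)^(s+3)) / (nOf (s+1) : ℝ) := by positivity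
        have hMc : (Mf α k : ℝ) * cf α k ≤ (Mf α k : ℝ) * (D : ℝ) := by
          apply mul_le_mul_of_nonneg_left _ hMk0
          linarith
        linarith
      rw [hr1, hr0, mul_assoc, ← Real.exp_add]
      calc α (lOf (s+1)) * Real.exp (-(Mf α (k+1) * cf α (k+1)))
          = Real.exp (Real.log (α (lOf (s+1))) + -(Mf α (k+1) * cf α (k+1))) := by
            rw [Real.exp_add, Real.exp_log hαl']
        _ ≤ Real.exp (Real.log (α (lOf s)) + (-(Mf α k * cf α k) + -((s:ℝ) + 1))) := by
            apply Real.exp_le_exp.2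
            linarith
        _ = α (lOf s) * Real.exp (-(Mf α k * cf α k) + -((s:ℝ) + 1)) := by
            rw [Real.exp_add, Real.exp_log hαl]

lemma rf_pos (hα : ∀ l, 1 ≤ l → 0 < α l) (k : ℕ) : 0 < rf α k :=
  mul_pos (hα _ (one_le_lOf _)) (Real.exp_pos _)

lemma σS_natCast_tendsto :
    Tendsto (fun k : ℕ => ((σS α k : ℝ) + 1)) atTop atTop := by
  apply tendsto_atTop_add_const_right
  exact tendsto_natCast_atTop_atTop.comp (σS_tendsto α)

lemma gap_tendsto (hα : ∀ l, 1 ≤ l → 0 < α l) :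
    Tendsto (fun k : ℕ => (Mf α (k + 1) : ℝ) - (Mf α k : ℝ)) atTop atTop := by
  apply tendsto_atTop_mono' atTop ?_ (σS_natCast_tendsto α)
  filter_upwards [eventually_ge_atTop 1] with k hk
  have h := (step α hα k hk).1
  have h' : (Mf α k : ℝ) + ((σS α k : ℝ) + 1) ≤ (Mf α (k + 1) : ℝ) := by exact_mod_cast h
  linarith

lemma ratio_tendsto (hα : ∀ l, 1 ≤ l → 0 < α l) :
    Tendsto (fun k : ℕ => rf α (k + 1) / rf α k) atTop (nhds 0) := by
  have hb : Tendsto (fun k : ℕ => Real.exp (-((σS α k : ℝ) + 1))) atTop (nhds 0) := by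
    apply Real.tendsto_exp_atBot.comp
    exact tendsto_neg_atTop_atBot.comp (σS_natCast_tendsto α)
  apply squeeze_zero' ?_ ?_ hb
  · filter_upwards [eventually_ge_atTop 1] with k _
    exact le_of_lt (div_pos (rf_pos α hα _) (rf_pos α hα _))
  · filter_upwards [eventually_ge_atTop 1] with k hk
    have h := (step α hα k hk).2
    have h0 : 0 < rf α k := rf_pos α hα k
    rw [div_le_iff₀ h0]
    calc rf α (k + 1) ≤ rf α k * Real.exp (-((σS α k : ℝ) + 1)) := h
      _ = Real.exp (-((σS α k : ℝ) + 1)) * rf α k := mul_comm _ _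

lemma cs_diff_le (s A m₀ : ℕ) (hA : 1 ≤ A) : ∀ m, m₀ ≤ m →
    cs s A m - cs s A m₀ ≤ ((m - m₀ : ℕ) : ℝ) * (1 / ((A:ℝ) + (m₀:ℝ) * GOf s) / nOf s) := by
  have hG0 : (0:ℝ) ≤ (GOf s : ℝ) := Nat.cast_nonneg _
  have hn0 : (0:ℝ) < (nOf s : ℝ) := by exact_mod_cast one_le_nOf s
  have hA1 : (1:ℝ) ≤ (A:ℝ) := by exact_mod_cast hA
  have hP : (0:ℝ) < (A:ℝ) + (m₀:ℝ) * GOf s := by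
    have : (0:ℝ) ≤ (m₀:ℝ) * GOf s := by positivity
    linarith
  intro m hm
  induction m, hm using Nat.le_induction with
  | base => simp
  | succ m hm ih =>
    have hstep : cs s A (m + 1) = cs s A m + 1 / ((A:ℝ) + ((m:ℝ) + 1) * GOf s) / nOf s :=
      cs_succ s A m
    have hmm : (m₀ : ℝ) ≤ (m:ℝ) + 1 := by exact_mod_cast Nat.le_succ_of_le hm
    have hterm : 1 / ((A:ℝ) + ((m:ℝ) + 1) * GOf s) / nOf s
        ≤ 1 / ((A:ℝ) + (m₀:ℝ) * GOf s) / nOf s := by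
      gcongr
    have hcnt : ((m + 1 - m₀ : ℕ) : ℝ) = ((m - m₀ : ℕ) : ℝ) + 1 := by
      have : m + 1 - m₀ = (m - m₀) + 1 := by omega
      rw [this]; push_cast; ring
    rw [hstep, hcnt]
    nlinarith [hterm, ih]

lemma hit (hα : ∀ l, 1 ≤ l → 0 < α l) (l : ℕ) (hl : 1 ≤ l) (ε : ℝ) (hε : 0 < ε)
    (lam : ℝ) (hlam : 1 < lam) (K : ℕ) :
    ∃ k, K < k ∧ jf k = l ∧ |lam ^ (Mf α k) * rf α k - α l| < ε := by
  have hαl : 0 < α l := hα l hl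
  set c := Real.log lam with hcdef
  have hc : 0 < c := Real.log_pos hlam
  -- choose the stage
  obtain ⟨q, hq1, hq2, hq3, hq4⟩ : ∃ q : ℕ, K ≤ q ∧ 1/c ≤ (q:ℝ) ∧ c ≤ (q:ℝ) ∧
      α l * 2^(l+2) / ε ≤ (q:ℝ) := by
    refine ⟨max (max K ⌈1/c⌉₊) (max ⌈c⌉₊ ⌈α l * 2^(l+2) / ε⌉₊), le_max_of_le_left (le_max_left _ _), ?_, ?_, ?_⟩
    · exact le_trans (Nat.le_ceil _) (Nat.cast_le.2 (le_max_of_le_left (le_max_right _ _)))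
    · exact le_trans (Nat.le_ceil _) (Nat.cast_le.2 (le_max_of_le_right (le_max_left _ _)))
    · exact le_trans (Nat.le_ceil _) (Nat.cast_le.2 (le_max_of_le_right (le_max_right _ _)))
  obtain ⟨s, hls, hqs⟩ : ∃ s : ℕ, lOf s = l ∧ q ≤ s := by
    refine ⟨Nat.pair (l - 1) q, ?_, Nat.right_le_pair _ _⟩
    unfold lOf
    rw [Nat.unpair_pair]
    omega
  have hns : q ≤ nOf s := by unfold nOf; omega
  have hnr : (q : ℝ) ≤ (nOf s : ℝ) := by exact_mod_cast hns
  have hn0 : (0:ℝ) < (nOf s : ℝ) := by exact_mod_cast one_le_nOf s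
  have hcn : c ≤ (nOf s : ℝ) := le_trans hq3 hnr
  have hinvn : 1 / (nOf s : ℝ) ≤ c := by
    rw [div_le_iff₀ hn0]
    have h1 : 1/c ≤ (nOf s : ℝ) := le_trans hq2 hnr
    calc (1:ℝ) = c * (1/c) := by field_simp
      _ ≤ c * (nOf s : ℝ) := mul_le_mul_of_nonneg_left h1 hc.le
  -- the grid offset
  have hex : ∃ m, c ≤ cs s (AS α s) m :=
    ⟨mlen s (AS α s), le_trans hcn (cs_mlen s (AS α s))⟩
  obtain ⟨m₀, hm₀, hm₀min, hm₀le⟩ : ∃ m₀, c ≤ cs s (AS α s) m₀ ∧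
      (∀ m < m₀, ¬ (c ≤ cs s (AS α s) m)) ∧ m₀ ≤ mlen s (AS α s) :=
    ⟨Nat.find hex, Nat.find_spec hex, fun m hm => Nat.find_min hex hm,
      Nat.find_min' hex (le_trans hcn (cs_mlen s (AS α s)))⟩
  have hA16 : 16 ≤ AS α s := by
    have h1 : (4:ℕ)^2 ≤ 4^(s+2) := Nat.pow_le_pow_right (by norm_num) (by omega)
    have := pow_le_AS α s
    omega
  have hA1 : 1 ≤ AS α s := by omega
  have hclow : cs s (AS α s) m₀ - 1 / ((AS α s : ℝ) + (m₀:ℝ) * GOf s) / nOf s ≤ c := by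
    rcases Nat.eq_zero_or_pos m₀ with h0 | h0
    · rw [h0]
      have h1 : cs s (AS α s) 0 = 1 / (nOf s : ℝ) := cs_zero s _
      have h2 : (0:ℝ) < 1 / ((AS α s : ℝ) + (0:ℝ) * GOf s) / nOf s := by
        have : (0:ℝ) < (AS α s : ℝ) := by exact_mod_cast (by omega : 0 < AS α s)
        positivity
      push_cast
      rw [h1]
      linarith [hinvn]
    · obtain ⟨m, hm1⟩ : ∃ m, m₀ = m + 1 := ⟨m₀ - 1, by omega⟩
      have hmin : ¬ (c ≤ cs s (AS α s) m) := hm₀min m (by omega)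
      push_neg at hmin
      have hstep := cs_succ s (AS α s) m
      rw [hm1]
      push_cast
      rw [hstep]
      linarith
  -- the fiber index
  obtain ⟨t, ht1, ht2, ht3⟩ := exists_fiber l hl (aS α s + m₀ - 1)
  have ha1 : 1 ≤ aS α s := succ_le_aS α s |>.trans' (by omega)
  have hta : aS α s + m₀ ≤ t := by omega
  have htb : t ≤ aS α s + m₀ + 2^l - 1 := by
    have h2 : 1 ≤ 2^l := Nat.one_le_two_pow
    omega
  have htlt : t < aS α (s+1) := by
    have h1 := bS_lt_aS_succ α s
    rw [hls] at h1
    have : bS α s = aS α s + mlen s (AS α s) := rfl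
    omega
  have hσt : σS α t = s := σS_eq α s t (by omega) htlt
  have hjt : jf t = l := by unfold jf; rw [ht3]; omega
  have hsa := succ_le_aS α s
  have htK : K < t := by omega
  -- formulas at t
  obtain ⟨mt, hmt⟩ : ∃ mt, t = aS α s + mt := ⟨t - aS α s, by omega⟩
  have hmtlb : m₀ ≤ mt := by omega
  have hmtub : (mt - m₀ : ℕ) + 1 ≤ 2^l := by
    have h2 : 1 ≤ 2^l := Nat.one_le_two_pow
    omega
  have hMt : Mf α t = AS α s + mt * GOf s := by
    unfold Mf
    rw [hσt]
    have : t - aS α s = mt := by omega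
    rw [this]
  have hct : cf α t = cs s (AS α s) mt := by
    unfold cf
    rw [hσt]
    have : t - aS α s = mt := by omega
    rw [this]
  have hrt : rf α t = α l * Real.exp (-(Mf α t * cf α t)) := by
    unfold rf
    rw [hσt, hls]
  -- the error estimate
  set P : ℝ := (AS α s : ℝ) + (m₀:ℝ) * GOf s with hPdef
  have hG0 : (0:ℝ) ≤ (GOf s : ℝ) := Nat.cast_nonneg _
  have hAr : (1:ℝ) ≤ (AS α s : ℝ) := by exact_mod_cast hA1
  have hP0 : (0:ℝ) < P := by
    have : (0:ℝ) ≤ (m₀:ℝ) * GOf s := by positivity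
    rw [hPdef]; linarith
  have hdiff := cs_diff_le s (AS α s) m₀ hA1 mt hmtlb
  have hθub : cs s (AS α s) mt - c ≤ (((mt - m₀ : ℕ) : ℝ) + 1) * (1 / P / nOf s) := by
    have h1 : cs s (AS α s) m₀ - c ≤ 1 / P / nOf s := by linarith [hclow]
    nlinarith [hdiff, h1]
  have hθlb : 0 ≤ cs s (AS α s) mt - c := by
    have := cs_mono s (AS α s) hmtlb
    linarith [hm₀]
  have hQ2P : (Mf α t : ℝ) ≤ 2 * P := by
    have hgle : (mt - m₀ : ℕ) * GOf s ≤ AS α s := by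
      calc (mt - m₀ : ℕ) * GOf s ≤ 2^l * GOf s := Nat.mul_le_mul_right _ (by omega)
        _ = 2 ^ lOf s * GOf s := by rw [hls]
        _ ≤ AS α s := pow_lOf_mul_GOf_le_AS α s
    have hgler : ((mt - m₀ : ℕ) : ℝ) * GOf s ≤ (AS α s : ℝ) := by exact_mod_cast hgle
    have hMtr : (Mf α t : ℝ) = (AS α s : ℝ) + (mt:ℝ) * GOf s := by
      rw [hMt]; push_cast; ring
    have hmtr : (mt : ℝ) = ((mt - m₀ : ℕ) : ℝ) + (m₀ : ℝ) := by
      exact_mod_cast congrArg (Nat.cast : ℕ → ℝ) (by omega : mt = (mt - m₀) + m₀)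
    rw [hMtr, hmtr, hPdef]
    nlinarith
  set θ : ℝ := (Mf α t : ℝ) * (cs s (AS α s) mt - c) with hθdef
  have hθ0 : 0 ≤ θ := mul_nonneg (Nat.cast_nonneg _) hθlb
  have hM0 : (0:ℝ) ≤ (Mf α t : ℝ) := Nat.cast_nonneg _
  have hθb : θ ≤ 2 ^ (l+1) / nOf s := by
    have h1 : θ ≤ 2 * P * ((((mt - m₀ : ℕ) : ℝ) + 1) * (1 / P / nOf s)) := by
      rw [hθdef]
      have := mul_le_mul hQ2P hθub hθlb (by linarith)
      linarith [this]
    have h2 : 2 * P * ((((mt - m₀ : ℕ) : ℝ) + 1) * (1 / P / nOf s)) =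
        2 * (((mt - m₀ : ℕ) : ℝ) + 1) / nOf s := by
      field_simp
    have h3 : ((mt - m₀ : ℕ) : ℝ) + 1 ≤ (2:ℝ)^l := by
      exact_mod_cast hmtub
    have h4 : 2 * (((mt - m₀ : ℕ) : ℝ) + 1) / nOf s ≤ 2 * (2:ℝ)^l / nOf s := by
      gcongr
    have h5 : 2 * (2:ℝ)^l / (nOf s : ℝ) = 2^(l+1) / nOf s := by ring
    linarith [h1, h2.le, h4]
  -- the value
  have hlam0 : (0:ℝ) < lam := lt_trans one_pos hlam
  have hpow : lam ^ (Mf α t) = Real.exp ((Mf α t : ℝ) * c) := by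
    conv_lhs => rw [← Real.exp_log hlam0]
    rw [← Real.exp_nat_mul]
  have hval : lam ^ (Mf α t) * rf α t = α l * Real.exp (-θ) := by
    rw [hrt, hpow, hct]
    rw [mul_comm (Real.exp _) _, mul_assoc, ← Real.exp_add]
    congr 1
    rw [hθdef]
    ring
  refine ⟨t, htK, hjt, ?_⟩
  rw [hval]
  have hexp1 : Real.exp (-θ) ≤ 1 := by
    rw [← Real.exp_zero]
    exact Real.exp_le_exp.2 (by linarith)
  have hexp2 : 1 - θ ≤ Real.exp (-θ) := by
    have := Real.add_one_le_exp (-θ)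
    linarith
  have habs : |α l * Real.exp (-θ) - α l| = α l * (1 - Real.exp (-θ)) := by
    rw [abs_of_nonpos (by nlinarith [Real.exp_pos (-θ)])]
    ring
  rw [habs]
  have hfin : α l * (1 - Real.exp (-θ)) ≤ α l * θ := by
    apply mul_le_mul_of_nonneg_left _ hαl.le
    linarith
  have hnum : α l * θ < ε := by
    have h1 : α l * θ ≤ α l * (2^(l+1) / nOf s) := mul_le_mul_of_nonneg_left hθb hαl.le
    have h2 : α l * 2^(l+2) ≤ ε * nOf s := by
      have := mul_le_mul_of_nonneg_left (le_trans hq4 hnr) hε.le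
      rw [mul_div_assoc] at this
      calc α l * 2^(l+2) = ε * (α l * 2^(l+2) / ε) := by field_simp
        _ ≤ ε * nOf s := mul_le_mul_of_nonneg_left (le_trans hq4 hnr) hε.le
    have h3 : (2:ℝ)^(l+2) = 2 * 2^(l+1) := by ring
    have h5 : (0:ℝ) < α l * 2^(l+1) := by positivity
    have h6 : α l * 2^(l+1) < ε * nOf s := by nlinarith
    have h4 : α l * (2^(l+1) / nOf s) < ε := by
      have : α l * (2^(l+1) / nOf s) = α l * 2^(l+1) / nOf s := by ring
      rw [this, div_lt_iff₀ hn0]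
      linarith
    linarith
  linarith

end AG

end

/-- multiplicative Abakumov–Gordon construction.
There exist `k₀ ≥ 1` and a choice function `j` such that for every sequence `(α_l)_{l ≥ 1}`
of positive reals there are a sequence `(M_k)_{k ≥ k₀}` of positive integers and a sequence
`(r_k)_{k ≥ k₀}` of positive reals with:
(i) `(M_k)` increasing and `M_{k+1} - M_k → ∞`;
(ii) `(r_k)` decreasing and `r_{k+1}/r_k → 0`;
(iii) for every `l ≥ 1`, `ε > 0`, `λ > 1` and `K`, there is `k > K` with `j k = l` and
`|λ ^ (M k) * r k - α l| < ε`. -/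
theorem abakumov_gordon_multiplicative :
    ∃ (k₀ : ℕ), 1 ≤ k₀ ∧ ∃ j : ℕ → ℕ,
      ∀ α : ℕ → ℝ, (∀ l, 1 ≤ l → 0 < α l) →
        ∃ (M : ℕ → ℕ) (r : ℕ → ℝ),
          (∀ k, k₀ ≤ k → 0 < M k) ∧
          (∀ k, k₀ ≤ k → M k < M (k + 1)) ∧
          Tendsto (fun k : ℕ => (M (k + 1) : ℝ) - (M k : ℝ)) atTop atTop ∧
          (∀ k, k₀ ≤ k → 0 < r k) ∧
          (∀ k, k₀ ≤ k → r (k + 1) < r k) ∧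
          Tendsto (fun k : ℕ => r (k + 1) / r k) atTop (nhds 0) ∧
          (∀ (l : ℕ), 1 ≤ l → ∀ ε : ℝ, 0 < ε → ∀ lam : ℝ, 1 < lam → ∀ K : ℕ,
            ∃ k, K < k ∧ j k = l ∧ |lam ^ (M k) * r k - α l| < ε) := by
  refine ⟨1, le_refl 1, AG.jf, fun α hα => ?_⟩
  refine ⟨AG.Mf α, AG.rf α, ?_, ?_, ?_, ?_, ?_, ?_, ?_⟩
  · intro k _; exact AG.Mf_pos α k
  · intro k hk; have := (AG.step α hα k hk).1; omega
  · exact AG.gap_tendsto α hα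
  · intro k _; exact AG.rf_pos α hα k
  · intro k hk
    have h := (AG.step α hα k hk).2
    have h0 := AG.rf_pos α hα k
    have hσ : (0:ℝ) ≤ (AG.σS α k : ℝ) := Nat.cast_nonneg _
    have hexp : Real.exp (-((AG.σS α k : ℝ) + 1)) < 1 :=
      lt_of_lt_of_eq (Real.exp_lt_exp.2 (by linarith : -((AG.σS α k : ℝ) + 1) < 0)) Real.exp_zero
    nlinarith
  · exact AG.ratio_tendsto α hα
  · intro l hl ε hε lam hlam K
    exact AG.hit α hα l hl ε hε lam hlam K
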